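/- For all rational numbers p and q with p ≠ 0, q ≠ 0, and p^6 + p^3*q^3 + q^6 ≠ 0, ((p^9 + 6*p^6*q^3 + 3*p^3*q^6 - q^9)/(3*p*q*(p^6 + p^3*q^3 + q^6)))^3 + ((q^9 + 6*q^6*p^3 + 3*q^3*p^6 - p^9)/(3*p*q*(p^6 + p^3*q^3 + q^6)))^3 = p^3 + q^3. -/

import Mathlib

theorem sum_two_cubes_parametrization (p q : ℚ) (hp : p ≠ 0) (hq : q ≠ 0)
    (hne : p ^ 6 + p ^ 3 * q ^ 3 + q ^ 6 ≠ 0) :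
    ((p ^ 9 + 6 * p ^ 6 * q ^ 3 + 3 * p ^ 3 * q ^ 6 - q ^ 9) /
        (3 * p * q * (p ^ 6 + p ^ 3 * q ^ 3 + q ^ 6))) ^ 3 +
      ((q ^ 9 + 6 * q ^ 6 * p ^ 3 + 3 * q ^ 3 * p ^ 6 - p ^ 9) /
        (3 * p * q * (p ^ 6 + p ^ 3 * q ^ 3 + q ^ 6))) ^ 3 =
    p ^ 3 + q ^ 3 := by
  have h3 : (3 : ℚ) ≠ 0 := by norm_num
  rw [div_pow, div_pow, ← add_div, div_eq_iff (pow_ne_zero _ (mul_ne_zero (mul_ne_zero (mul_ne_zero h3 hp) hq) hne))]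
  ring
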